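/- Vanishing of chain maps between staircase complexes. Let R = F2[W,Z], and let d : R^n → R^{n+1} and d' : R^m → R^{m+1} be the staircase differentials associated to staircase data (n, α, β) and (m, α', β') with all step values ≥ 1. (a) Any chain map between the staircase complexes that strictly increases the algebraic grading vanishes: if g : R^{n+1} → R^m is an R-linear map (the only possible component of such a chain map, from the algebraic grading 0 part of the source to the algebraic grading 1 part of the target) satisfying d' ∘ g = 0, then g = 0. (b) Any chain map preserving the algebraic grading that vanishes in algebraic grading 0 vanishes identically: if F₁ : R^n → R^m and F₀ : R^{n+1} → R^{m+1} are R-linear with d' ∘ F₁ = F₀ ∘ d and F₀ = 0, then F₁ = 0. -/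
import Mathlib




local notation "R" => MvPolynomial (Fin 2) (ZMod 2)
local notation "W" => (MvPolynomial.X 0 : MvPolynomial (Fin 2) (ZMod 2))
local notation "Z" => (MvPolynomial.X 1 : MvPolynomial (Fin 2) (ZMod 2))

theorem staircase_inj (m : ℕ) (α' β' : Fin m → ℕ)
    (d' : (Fin m → R) →ₗ[R] (Fin (m + 1) → R))
    (hd' : ∀ i : Fin m, d' (Pi.single i 1) =
      Pi.single i.castSucc (W ^ α' i) + Pi.single i.succ (Z ^ β' i)) :
    ∀ x : Fin m → R, d' x = 0 → x = 0 := by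
  classical
  intro x hx
  have hexp : ∀ k : Fin (m+1),
      (∑ i, x i * (Pi.single (Fin.castSucc i) (W ^ α' i) : Fin (m+1) → R) k)
        + (∑ i, x i * (Pi.single (Fin.succ i) (Z ^ β' i) : Fin (m+1) → R) k) = 0 := by
    intro k
    have hxr : x = ∑ i, x i • (Pi.single i (1:R) : Fin m → R) := by
      funext j
      simp [Finset.sum_apply, Pi.single_apply]
    have h1 : d' x = ∑ i, x i • d' (Pi.single i 1) := by
      conv_lhs => rw [hxr]
      rw [map_sum]
      simp
    rw [hx] at h1
    have h2 := congrFun h1 k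
    simp only [hd', Finset.sum_apply, Pi.smul_apply, Pi.add_apply, smul_add,
      Pi.zero_apply, smul_eq_mul, mul_add] at h2
    rw [Finset.sum_add_distrib] at h2
    exact h2.symm
  have hWp : ∀ a : ℕ, ((W : R) ^ a) ≠ 0 := fun a => pow_ne_zero _ (MvPolynomial.X_ne_zero 0)
  have main : ∀ j : ℕ, ∀ hj : j < m, x ⟨j, hj⟩ = 0 := by
    intro j
    induction j with
    | zero =>
      intro hj
      have h := hexp (Fin.castSucc ⟨0, hj⟩)
      rw [Finset.sum_eq_single (⟨0, hj⟩ : Fin m) ?h1 ?h2, Finset.sum_eq_zero ?h3] at h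
      case h1 =>
        intro i _ hne
        rw [Pi.single_eq_of_ne (fun hc => hne (Fin.castSucc_inj.mp hc).symm), mul_zero]
      case h2 => intro habs; exact absurd (Finset.mem_univ _) habs
      case h3 =>
        intro i _
        rw [Pi.single_eq_of_ne (by simp [Fin.ext_iff]), mul_zero]
      rw [Pi.single_eq_same, add_zero] at h
      exact (mul_eq_zero.mp h).resolve_right (hWp _)
    | succ jj ih =>
      intro hj
      have hjj : jj < m := Nat.lt_of_succ_lt hj
      have h := hexp (Fin.castSucc ⟨jj + 1, hj⟩)
      rw [Finset.sum_eq_single (⟨jj + 1, hj⟩ : Fin m) ?h1 ?h2,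
        Finset.sum_eq_single (⟨jj, hjj⟩ : Fin m) ?h3 ?h4] at h
      case h1 =>
        intro i _ hne
        rw [Pi.single_eq_of_ne (fun hc => hne (Fin.castSucc_inj.mp hc).symm), mul_zero]
      case h2 => intro habs; exact absurd (Finset.mem_univ _) habs
      case h3 =>
        intro i _ hne
        have hv : (i : ℕ) ≠ jj := fun hv => hne (Fin.ext hv)
        rw [Pi.single_eq_of_ne (by
          intro hc
          rw [Fin.ext_iff] at hc
          simp only [Fin.coe_castSucc, Fin.val_succ] at hc
          omega), mul_zero]
      case h4 => intro habs; exact absurd (Finset.mem_univ _) habs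
      have hpt : (⟨jj, hjj⟩ : Fin m).succ = (⟨jj + 1, hj⟩ : Fin m).castSucc := by
        simp [Fin.ext_iff]
      rw [ih hjj, zero_mul, add_zero, Pi.single_eq_same] at h
      exact (mul_eq_zero.mp h).resolve_right (hWp _)
  funext j
  simpa using main j.val j.isLt


/-- Vanishing of chain maps between staircase complexes:
(a) a chain map strictly increasing the algebraic grading vanishes;
(b) a grading-preserving chain map vanishing in algebraic grading 0 vanishes. -/
theorem staircase_chain_maps_vanish
    (n m : ℕ) (α β : Fin n → ℕ) (α' β' : Fin m → ℕ)
    (hα : ∀ i, 1 ≤ α i) (hβ : ∀ i, 1 ≤ β i)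
    (hα' : ∀ i, 1 ≤ α' i) (hβ' : ∀ i, 1 ≤ β' i)
    (d : (Fin n → R) →ₗ[R] (Fin (n + 1) → R))
    (hd : ∀ i : Fin n, d (Pi.single i 1) =
      Pi.single i.castSucc (W ^ α i) + Pi.single i.succ (Z ^ β i))
    (d' : (Fin m → R) →ₗ[R] (Fin (m + 1) → R))
    (hd' : ∀ i : Fin m, d' (Pi.single i 1) =
      Pi.single i.castSucc (W ^ α' i) + Pi.single i.succ (Z ^ β' i)) :
    (∀ g : (Fin (n + 1) → R) →ₗ[R] (Fin m → R), d' ∘ₗ g = 0 → g = 0) ∧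
    (∀ (F₁ : (Fin n → R) →ₗ[R] (Fin m → R))
       (F₀ : (Fin (n + 1) → R) →ₗ[R] (Fin (m + 1) → R)),
      d' ∘ₗ F₁ = F₀ ∘ₗ d → F₀ = 0 → F₁ = 0) := by
  constructor
  · intro g hg
    apply LinearMap.ext
    intro v
    simpa using staircase_inj m α' β' d' hd' (g v) (by simpa using LinearMap.congr_fun hg v)
  · intro F₁ F₀ hcomm hF0
    apply LinearMap.ext
    intro v
    have hz : d' (F₁ v) = 0 := by
      have := LinearMap.congr_fun hcomm v
      simpa [hF0] using this
    simpa using staircase_inj m α' β' d' hd' (F₁ v) hz
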